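/- arXiv:1907.01593 — 2 statements merged into one kernel-verified Lean document; each statement's English description precedes it below -/
import Mathlib

section
/- For every real number t, the cubic uniform B-spline B³ is differentiable at t with derivative B²(t + 1/2) − B²(t − 1/2), where B² is the quadratic uniform B-spline. -/
/-- The quadratic uniform B-spline. -/
noncomputable def B2 (t : ℝ) : ℝ :=
  if |t| ≤ 1/2 then 3/4 - t^2
  else if |t| ≤ 3/2 then (1/2) * (3/2 - |t|)^2
  else 0

/-- The cubic uniform B-spline. -/
noncomputable def B3 (t : ℝ) : ℝ :=
  if |t| ≤ 1 then (1/6) * (4 - 3*t^2*(2 - |t|))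
  else if |t| ≤ 2 then (1/6) * (2 - |t|)^3
  else 0

noncomputable def pp (x : ℝ) : ℝ := (max x 0)^3
noncomputable def qq (x : ℝ) : ℝ := (max x 0)^2

lemma pp_of_nonneg {x : ℝ} (h : 0 ≤ x) : pp x = x^3 := by
  simp [pp, max_eq_left h]

lemma pp_of_nonpos {x : ℝ} (h : x ≤ 0) : pp x = 0 := by
  simp [pp, max_eq_right h]

lemma qq_of_nonneg {x : ℝ} (h : 0 ≤ x) : qq x = x^2 := by
  simp [qq, max_eq_left h]

lemma qq_of_nonpos {x : ℝ} (h : x ≤ 0) : qq x = 0 := by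
  simp [qq, max_eq_right h]

lemma hasDerivAt_pp_zero : HasDerivAt pp 0 0 := by
  rw [hasDerivAt_iff_tendsto_slope]
  have hb : ∀ x : ℝ, ‖slope pp 0 x‖ ≤ x^2 := by
    intro x
    rcases le_or_gt x 0 with hx | hx
    · rw [slope_def_field, pp_of_nonpos hx, pp_of_nonpos le_rfl]
      simp [sq_nonneg x]
    · rw [slope_def_field, pp_of_nonneg hx.le, pp_of_nonpos le_rfl]
      rw [sub_zero, sub_zero]
      have : x^3 / x = x^2 := by field_simp
      rw [this, Real.norm_eq_abs, abs_of_nonneg (sq_nonneg x)]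
  have h2 : Filter.Tendsto (fun x : ℝ => x^2) (nhdsWithin 0 {(0:ℝ)}ᶜ) (nhds 0) := by
    have := (continuous_pow 2).tendsto (0:ℝ)
    simpa using this.mono_left nhdsWithin_le_nhds
  exact squeeze_zero_norm hb h2

lemma hasDerivAt_pp (x : ℝ) : HasDerivAt pp (3 * qq x) x := by
  rcases lt_trichotomy x 0 with hx | hx | hx
  · have h0 : HasDerivAt (fun _ : ℝ => (0:ℝ)) 0 x := hasDerivAt_const x 0
    have heq : pp =ᶠ[nhds x] fun _ => (0:ℝ) := by
      filter_upwards [Iio_mem_nhds hx] with y hy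
      exact pp_of_nonpos (le_of_lt hy)
    have := h0.congr_of_eventuallyEq heq
    simpa [qq_of_nonpos hx.le] using this
  · subst hx
    simpa [qq_of_nonpos le_rfl] using hasDerivAt_pp_zero
  · have h0 : HasDerivAt (fun y : ℝ => y^3) (3 * x^2) x := by
      simpa using hasDerivAt_pow 3 x
    have heq : pp =ᶠ[nhds x] fun y => y^3 := by
      filter_upwards [Ioi_mem_nhds hx] with y hy
      exact pp_of_nonneg (le_of_lt hy)
    have := h0.congr_of_eventuallyEq heq
    simpa [qq_of_nonneg hx.le] using this

lemma B2_mid {x : ℝ} (h : |x| ≤ 1/2) : B2 x = 3/4 - x^2 := by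
  unfold B2; rw [if_pos h]

lemma B2_side {x : ℝ} (h1 : 1/2 ≤ |x|) (h2 : |x| ≤ 3/2) :
    B2 x = (1/2) * (3/2 - |x|)^2 := by
  unfold B2
  rcases le_or_gt |x| (1/2) with h3 | h3
  · have ha : |x| = 1/2 := le_antisymm h3 h1
    have hx2 : x^2 = (1/2)^2 := by rw [← sq_abs, ha]
    rw [if_pos h3, ha, hx2]; norm_num
  · rw [if_neg (not_le.mpr h3), if_pos h2]

lemma B2_out {x : ℝ} (h : 3/2 ≤ |x|) : B2 x = 0 := by
  unfold B2
  split_ifs with h3 h4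
  · exfalso; linarith
  · have ha : |x| = 3/2 := le_antisymm h4 h
    rw [ha]; norm_num
  · rfl

lemma B3_mid {t : ℝ} (h : |t| ≤ 1) : B3 t = (1/6) * (4 - 3*t^2*(2 - |t|)) := by
  unfold B3; rw [if_pos h]

lemma B3_side {t : ℝ} (h1 : 1 ≤ |t|) (h2 : |t| ≤ 2) :
    B3 t = (1/6) * (2 - |t|)^3 := by
  unfold B3
  rcases le_or_gt |t| 1 with h3 | h3
  · have ha : |t| = 1 := le_antisymm h3 h1
    have ht2 : t^2 = 1 := by rw [← sq_abs, ha]; norm_num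
    rw [if_pos h3, ha, ht2]; norm_num
  · rw [if_neg (not_le.mpr h3), if_pos h2]

lemma B3_out {t : ℝ} (h : 2 ≤ |t|) : B3 t = 0 := by
  unfold B3
  split_ifs with h3 h4
  · exfalso; linarith
  · have ha : |t| = 2 := le_antisymm h4 h
    rw [ha]; norm_num
  · rfl

lemma B3_eq (t : ℝ) :
    B3 t = (1/6) * (pp (t+2) - 4 * pp (t+1) + 6 * pp t - 4 * pp (t-1) + pp (t-2)) := by
  rcases le_or_gt t (-2) with h | h
  · rw [B3_out (by rw [abs_of_nonpos (by linarith)]; linarith),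
      pp_of_nonpos (by linarith), pp_of_nonpos (by linarith),
      pp_of_nonpos (by linarith), pp_of_nonpos (by linarith),
      pp_of_nonpos (by linarith)]
    ring
  rcases le_or_gt t (-1) with h1 | h1
  · have habs : |t| = -t := abs_of_nonpos (by linarith)
    rw [B3_side (by rw [habs]; linarith) (by rw [habs]; linarith), habs,
      pp_of_nonneg (by linarith), pp_of_nonpos (by linarith),
      pp_of_nonpos (by linarith), pp_of_nonpos (by linarith),
      pp_of_nonpos (by linarith)]
    ring
  rcases le_or_gt t 0 with h2 | h2
  · have habs : |t| = -t := abs_of_nonpos h2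
    rw [B3_mid (by rw [habs]; linarith), habs,
      pp_of_nonneg (by linarith), pp_of_nonneg (by linarith),
      pp_of_nonpos h2, pp_of_nonpos (by linarith), pp_of_nonpos (by linarith)]
    ring
  rcases le_or_gt t 1 with h3 | h3
  · have habs : |t| = t := abs_of_nonneg h2.le
    rw [B3_mid (by rw [habs]; linarith), habs,
      pp_of_nonneg (by linarith), pp_of_nonneg (by linarith),
      pp_of_nonneg h2.le, pp_of_nonpos (by linarith), pp_of_nonpos (by linarith)]
    ring
  rcases le_or_gt t 2 with h4 | h4
  · have habs : |t| = t := abs_of_nonneg (by linarith)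
    rw [B3_side (by rw [habs]; linarith) (by rw [habs]; linarith), habs,
      pp_of_nonneg (by linarith), pp_of_nonneg (by linarith),
      pp_of_nonneg (by linarith), pp_of_nonneg (by linarith),
      pp_of_nonpos (by linarith)]
    ring
  · rw [B3_out (by rw [abs_of_nonneg (by linarith)]; linarith),
      pp_of_nonneg (by linarith), pp_of_nonneg (by linarith),
      pp_of_nonneg (by linarith), pp_of_nonneg (by linarith),
      pp_of_nonneg (by linarith)]
    ring

lemma B2_diff_eq (t : ℝ) :
    B2 (t + 1/2) - B2 (t - 1/2)
      = (1/2) * (qq (t+2) - 4 * qq (t+1) + 6 * qq t - 4 * qq (t-1) + qq (t-2)) := by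
  rcases le_or_gt t (-2) with h | h
  · rw [B2_out (by rw [abs_of_nonpos (by linarith)]; linarith),
      B2_out (by rw [abs_of_nonpos (by linarith)]; linarith),
      qq_of_nonpos (by linarith), qq_of_nonpos (by linarith),
      qq_of_nonpos (by linarith), qq_of_nonpos (by linarith),
      qq_of_nonpos (by linarith)]
    ring
  rcases le_or_gt t (-1) with h1 | h1
  · have ha1 : |t + 1/2| = -(t + 1/2) := abs_of_nonpos (by linarith)
    rw [B2_side (by rw [ha1]; linarith) (by rw [ha1]; linarith),
      B2_out (by rw [abs_of_nonpos (by linarith)]; linarith), ha1,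
      qq_of_nonneg (by linarith), qq_of_nonpos (by linarith),
      qq_of_nonpos (by linarith), qq_of_nonpos (by linarith),
      qq_of_nonpos (by linarith)]
    ring
  rcases le_or_gt t 0 with h2 | h2
  · have ha1 : |t + 1/2| ≤ 1/2 := abs_le.mpr ⟨by linarith, by linarith⟩
    have ha2 : |t - 1/2| = -(t - 1/2) := abs_of_nonpos (by linarith)
    rw [B2_mid ha1, B2_side (by rw [ha2]; linarith) (by rw [ha2]; linarith), ha2,
      qq_of_nonneg (by linarith), qq_of_nonneg (by linarith),
      qq_of_nonpos h2, qq_of_nonpos (by linarith), qq_of_nonpos (by linarith)]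
    ring
  rcases le_or_gt t 1 with h3 | h3
  · have ha1 : |t + 1/2| = t + 1/2 := abs_of_nonneg (by linarith)
    have ha2 : |t - 1/2| ≤ 1/2 := abs_le.mpr ⟨by linarith, by linarith⟩
    rw [B2_side (by rw [ha1]; linarith) (by rw [ha1]; linarith), B2_mid ha2, ha1,
      qq_of_nonneg (by linarith), qq_of_nonneg (by linarith),
      qq_of_nonneg h2.le, qq_of_nonpos (by linarith), qq_of_nonpos (by linarith)]
    ring
  rcases le_or_gt t 2 with h4 | h4
  · have ha2 : |t - 1/2| = t - 1/2 := abs_of_nonneg (by linarith)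
    rw [B2_out (by rw [abs_of_nonneg (by linarith)]; linarith),
      B2_side (by rw [ha2]; linarith) (by rw [ha2]; linarith), ha2,
      qq_of_nonneg (by linarith), qq_of_nonneg (by linarith),
      qq_of_nonneg (by linarith), qq_of_nonneg (by linarith),
      qq_of_nonpos (by linarith)]
    ring
  · rw [B2_out (by rw [abs_of_nonneg (by linarith)]; linarith),
      B2_out (by rw [abs_of_nonneg (by linarith)]; linarith),
      qq_of_nonneg (by linarith), qq_of_nonneg (by linarith),
      qq_of_nonneg (by linarith), qq_of_nonneg (by linarith),
      qq_of_nonneg (by linarith)]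
    ring

lemma hasDerivAt_pp_shift (t c : ℝ) :
    HasDerivAt (fun x => pp (x + c)) (3 * qq (t + c)) t := by
  have h := (hasDerivAt_pp (t + c)).comp t ((hasDerivAt_id t).add_const c)
  simpa [Function.comp_def] using h

/-- For every real `t`, the cubic uniform B-spline `B3` is differentiable at `t`
with derivative `B2 (t + 1/2) - B2 (t - 1/2)`. -/
theorem hasDerivAt_B3 (t : ℝ) :
    HasDerivAt B3 (B2 (t + 1/2) - B2 (t - 1/2)) t := by
  have h2 := hasDerivAt_pp_shift t 2
  have h1 := hasDerivAt_pp_shift t 1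
  have h0 := hasDerivAt_pp_shift t 0
  have hm1 := hasDerivAt_pp_shift t (-1)
  have hm2 := hasDerivAt_pp_shift t (-2)
  have H : HasDerivAt
      (fun x => (1/6) * (pp (x+2) - 4 * pp (x+1) + 6 * pp x - 4 * pp (x-1) + pp (x-2)))
      ((1/6) * (3 * qq (t+2) - 4 * (3 * qq (t+1)) + 6 * (3 * qq t)
        - 4 * (3 * qq (t-1)) + 3 * qq (t-2))) t := by
    have := (((((h2.sub (h1.const_mul 4)).add (h0.const_mul 6)).sub
      (hm1.const_mul 4)).add hm2).const_mul (1/6))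
    simpa [sub_eq_add_neg, add_comm, add_left_comm, add_assoc, mul_comm,
      mul_left_comm, mul_assoc] using this
  have hfun : B3 = fun x => (1/6) * (pp (x+2) - 4 * pp (x+1) + 6 * pp x - 4 * pp (x-1) + pp (x-2)) :=
    funext B3_eq
  rw [hfun, B2_diff_eq t]
  convert H using 1
  ring
end

section
/- (Incompressibility error of the Euler approximation of the Lie exponential.) Let v : ℝ³ → ℝ³ be Fréchet differentiable everywhere, let K ≥ 1 be a natural number, and consider one Euler step f(x) = x + (1/K)·v(x). Let m₀ = m and m_{k+1} = f(m_k) for k < K. Suppose ε ≥ 0 and L ≥ 0 are such that for every k < K the divergence of v at m_k satisfies |div v(m_k)| ≤ ε and every entry of the Jacobian matrix Dv(m_k) has absolute value at most L. Then the K-fold composition f∘…∘f (the Euler approximation of exp(v)) is Fréchet differentiable at m and the determinant of its derivative at m satisfies |det D(f^{∘K})(m) − 1| ≤ exp(ε + 6L²/K + 6L³/K²) − 1. -/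
/-- The Jacobian matrix of a map `v : ℝ³ → ℝ³` at a point `p`. -/
noncomputable def jacobian (v : (Fin 3 → ℝ) → (Fin 3 → ℝ)) (p : Fin 3 → ℝ) :
    Matrix (Fin 3) (Fin 3) ℝ :=
  LinearMap.toMatrix' (fderiv ℝ v p).toLinearMap


lemma step_det_bound (M : Matrix (Fin 3) (Fin 3) ℝ) (τ ε L : ℝ) (hτ : 0 ≤ τ)
    (hε : |M.trace| ≤ ε) (hL0 : 0 ≤ L) (hL : ∀ i j, |M i j| ≤ L) :
    |(1 + τ • M).det - 1| ≤ τ * ε + τ^2 * (6 * L^2) + τ^3 * (6 * L^3) := by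
  set a := M 0 0; set b := M 0 1; set c := M 0 2
  set d := M 1 0; set e := M 1 1; set f := M 1 2
  set g := M 2 0; set h := M 2 1; set i := M 2 2
  have htr : M.trace = a + e + i := by
    simp [Matrix.trace_fin_three]; rfl
  have hdet : (1 + τ • M).det - 1
      = τ * (a + e + i)
        + τ^2 * (a*e + a*i + e*i - b*d - c*g - f*h)
        + τ^3 * (a*e*i - a*f*h - b*d*i + b*f*g + c*d*h - c*e*g) := by
    simp [Matrix.det_fin_three, Matrix.add_apply, Matrix.smul_apply, Matrix.one_apply]
    ring
  have hab : ∀ x y : ℝ, |x| ≤ L → |y| ≤ L → |x*y| ≤ L^2 := by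
    intro x y hx hy
    rw [abs_mul, sq]
    exact mul_le_mul hx hy (abs_nonneg _) hL0
  have hab3 : ∀ x y z : ℝ, |x| ≤ L → |y| ≤ L → |z| ≤ L → |x*y*z| ≤ L^3 := by
    intro x y z hx hy hz
    rw [abs_mul, abs_mul]
    calc |x| * |y| * |z| ≤ L * L * L := by
          apply mul_le_mul _ hz (abs_nonneg _) (by positivity)
          exact mul_le_mul hx hy (abs_nonneg _) hL0
      _ = L^3 := by ring
  have hS : |a*e + a*i + e*i - b*d - c*g - f*h| ≤ 6 * L^2 := by
    calc abs (a*e + a*i + e*i - b*d - c*g - f*h)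
        ≤ abs (a*e) + abs (a*i) + abs (e*i) + abs (b*d) + abs (c*g) + abs (f*h) := by
          repeat first
          | exact le_refl _
          | apply (abs_sub _ _).trans
          | apply add_le_add
          | apply (abs_add_le _ _).trans
      _ ≤ L^2 + L^2 + L^2 + L^2 + L^2 + L^2 := by
          gcongr <;> exact hab _ _ (hL _ _) (hL _ _)
      _ = 6 * L^2 := by ring
  have hD : |a*e*i - a*f*h - b*d*i + b*f*g + c*d*h - c*e*g| ≤ 6 * L^3 := by
    calc abs (a*e*i - a*f*h - b*d*i + b*f*g + c*d*h - c*e*g)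
        ≤ abs (a*e*i) + abs (a*f*h) + abs (b*d*i) + abs (b*f*g) + abs (c*d*h) + abs (c*e*g) := by
          repeat first
          | exact le_refl _
          | apply (abs_sub _ _).trans
          | apply add_le_add
          | apply (abs_add_le _ _).trans
      _ ≤ L^3 + L^3 + L^3 + L^3 + L^3 + L^3 := by
          gcongr <;> exact hab3 _ _ _ (hL _ _) (hL _ _) (hL _ _)
      _ = 6 * L^3 := by ring
  rw [hdet]
  calc abs (τ * (a + e + i) + τ^2 * (a*e + a*i + e*i - b*d - c*g - f*h)
        + τ^3 * (a*e*i - a*f*h - b*d*i + b*f*g + c*d*h - c*e*g))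
      ≤ abs (τ * (a + e + i)) + abs (τ^2 * (a*e + a*i + e*i - b*d - c*g - f*h))
        + abs (τ^3 * (a*e*i - a*f*h - b*d*i + b*f*g + c*d*h - c*e*g)) := by
        apply (abs_add_le _ _).trans
        gcongr
        exact abs_add_le _ _
    _ ≤ τ * ε + τ^2 * (6 * L^2) + τ^3 * (6 * L^3) := by
        have h1 : abs (τ * (a + e + i)) ≤ τ * ε := by
          rw [abs_mul, abs_of_nonneg hτ]
          exact mul_le_mul_of_nonneg_left (htr ▸ hε) hτ
        have h2 : abs (τ^2 * (a*e + a*i + e*i - b*d - c*g - f*h)) ≤ τ^2 * (6 * L^2) := by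
          rw [abs_mul, abs_pow, abs_of_nonneg hτ]
          exact mul_le_mul_of_nonneg_left hS (by positivity)
        have h3 : abs (τ^3 * (a*e*i - a*f*h - b*d*i + b*f*g + c*d*h - c*e*g))
            ≤ τ^3 * (6 * L^3) := by
          rw [abs_mul, abs_pow, abs_of_nonneg hτ]
          exact mul_le_mul_of_nonneg_left hD (by positivity)
        linarith

lemma prod_det_bound (a : ℝ) (ha : 0 ≤ a) (d : ℕ → ℝ) (n : ℕ)
    (hd : ∀ k < n, |d k - 1| ≤ a) :
    |(∏ k ∈ Finset.range n, d k) - 1| ≤ Real.exp (n * a) - 1 := by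
  induction n with
  | zero => simp
  | succ n ih =>
    have ih' := ih (fun k hk => hd k (hk.trans (Nat.lt_succ_self n)))
    set P := ∏ k ∈ Finset.range n, d k with hP
    rw [Finset.prod_range_succ]
    have hdn := hd n (Nat.lt_succ_self n)
    have hPabs : |P| ≤ Real.exp (n * a) := by
      calc |P| ≤ |P - 1| + 1 := by
            have := abs_sub_abs_le_abs_sub P 1
            simp at this; linarith
        _ ≤ Real.exp (n * a) := by linarith
    have key : |P * d n - 1| ≤ |d n - 1| * |P| + |P - 1| := by
      calc |P * d n - 1| = |(d n - 1) * P + (P - 1)| := by ring_nf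
        _ ≤ |(d n - 1) * P| + |P - 1| := abs_add_le _ _
        _ = |d n - 1| * |P| + |P - 1| := by rw [abs_mul]
    have hexp : Real.exp ((n+1 : ℕ) * a) = Real.exp a * Real.exp (n * a) := by
      rw [← Real.exp_add]; congr 1; push_cast; ring
    calc |P * d n - 1| ≤ |d n - 1| * |P| + |P - 1| := key
      _ ≤ a * Real.exp (n * a) + (Real.exp (n * a) - 1) := by
          apply add_le_add _ ih'
          exact mul_le_mul hdn hPabs (abs_nonneg _) ha
      _ ≤ Real.exp ((n+1 : ℕ) * a) - 1 := by
          rw [hexp]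
          nlinarith [Real.add_one_le_exp a, Real.exp_pos (n * a)]

/-- **Incompressibility error of the Euler approximation of the Lie exponential.**
Let `v : ℝ³ → ℝ³` be differentiable, `K ≥ 1`, and `f x = x + (1/K) • v x` one Euler step.
If along the Euler iterates `m_k = f^[k] m` (for `k < K`) the divergence of `v` is bounded
by `ε` and the Jacobian entries of `v` are bounded by `L`, then the `K`-fold composition
`f^[K]` is differentiable at `m` and
`|det D(f^[K])(m) - 1| ≤ exp (ε + 6L²/K + 6L³/K²) - 1`. -/
theorem euler_incompressibility_error (v : (Fin 3 → ℝ) → (Fin 3 → ℝ))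
    (hv : Differentiable ℝ v) (K : ℕ) (hK : 1 ≤ K)
    (f : (Fin 3 → ℝ) → (Fin 3 → ℝ))
    (hf : f = fun x => x + (1 / (K : ℝ)) • v x)
    (m : Fin 3 → ℝ) (ε L : ℝ) (hε : 0 ≤ ε) (hL : 0 ≤ L)
    (hdiv : ∀ k < K, |(jacobian v (f^[k] m)).trace| ≤ ε)
    (hentries : ∀ k < K, ∀ i j : Fin 3, |jacobian v (f^[k] m) i j| ≤ L) :
    DifferentiableAt ℝ (f^[K]) m ∧
    |LinearMap.det (fderiv ℝ (f^[K]) m).toLinearMap - 1| ≤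
      Real.exp (ε + 6 * L^2 / K + 6 * L^3 / K^2) - 1 := by
  set τ : ℝ := 1 / (K : ℝ) with hτdef
  have hKpos : (0 : ℝ) < K := by exact_mod_cast hK
  have hτ : 0 ≤ τ := by positivity
  -- differentiability of f
  have hfd : Differentiable ℝ f := by
    rw [hf]; exact differentiable_id.add (hv.fun_const_smul _)
  -- derivative of f at any point
  have hDf : ∀ p : Fin 3 → ℝ, fderiv ℝ f p
      = ContinuousLinearMap.id ℝ (Fin 3 → ℝ) + τ • fderiv ℝ v p := by
    intro p
    rw [hf]
    rw [fderiv_fun_add differentiableAt_fun_id ((hv p).fun_const_smul τ), fderiv_fun_id,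
      fderiv_fun_const_smul (hv p)]
  -- det of one step
  have hdetf : ∀ p : Fin 3 → ℝ,
      LinearMap.det (fderiv ℝ f p).toLinearMap = (1 + τ • jacobian v p).det := by
    intro p
    rw [← LinearMap.det_toMatrix' (fderiv ℝ f p).toLinearMap]
    congr 1
    rw [hDf p]
    push_cast [ContinuousLinearMap.coe_add, ContinuousLinearMap.coe_smul]
    simp [map_add, map_smul, LinearMap.toMatrix'_id, jacobian]
  -- iterates: differentiability and det product formula
  have hiter : ∀ n : ℕ, DifferentiableAt ℝ (f^[n]) m ∧
      LinearMap.det (fderiv ℝ (f^[n]) m).toLinearMap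
        = ∏ k ∈ Finset.range n, LinearMap.det (fderiv ℝ f (f^[k] m)).toLinearMap := by
    intro n
    induction n with
    | zero =>
      constructor
      · simp only [Function.iterate_zero]; exact differentiableAt_id
      · simp [Function.iterate_zero]
    | succ n ih =>
      obtain ⟨ihd, ihdet⟩ := ih
      have hcomp : f^[n+1] = f ∘ f^[n] := Function.iterate_succ' f n
      have hd' : DifferentiableAt ℝ (f^[n+1]) m := by
        rw [hcomp]; exact (hfd (f^[n] m)).comp m ihd
      refine ⟨hd', ?_⟩
      have : fderiv ℝ (f^[n+1]) m
          = (fderiv ℝ f (f^[n] m)).comp (fderiv ℝ (f^[n]) m) := by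
        rw [hcomp]
        exact fderiv_comp m (hfd (f^[n] m)) ihd
      rw [this, Finset.prod_range_succ]
      rw [ContinuousLinearMap.toLinearMap_comp, LinearMap.det_comp, ihdet]
      ring
  obtain ⟨hd, hdet⟩ := hiter K
  refine ⟨hd, ?_⟩
  rw [hdet]
  set a : ℝ := τ * ε + τ^2 * (6 * L^2) + τ^3 * (6 * L^3) with ha_def
  have ha : 0 ≤ a := by positivity
  have hbound : ∀ k < K,
      |LinearMap.det (fderiv ℝ f (f^[k] m)).toLinearMap - 1| ≤ a := by
    intro k hk
    rw [hdetf]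
    exact step_det_bound _ τ ε L hτ (hdiv k hk) hL (hentries k hk)
  have := prod_det_bound a ha
    (fun k => LinearMap.det (fderiv ℝ f (f^[k] m)).toLinearMap) K hbound
  refine this.trans ?_
  have hKa : (K : ℝ) * a = ε + 6 * L^2 / K + 6 * L^3 / K^2 := by
    rw [ha_def, hτdef]
    field_simp
  rw [hKa]
end
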